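/- In the setting of Problem 1, let (x_n)_{n∈ℕ} be a sequence generated by Algorithm 1, and for n ≥ 1 define y_{n+1} = (∇F(x_n) − ∇F(x_{n+1}))/α_n + ∇g(x_{n+1}) − ∇g(x_n) + (β_n/α_n)(x_n − x_{n−1}). Then for every n ≥ 1 one has y_{n+1} ∈ ∂(f+g)(x_{n+1}), and moreover ‖y_{n+1}‖ ≤ ((L_{∇F} + α_n L_{∇g})/α_n)‖x_n − x_{n+1}‖ + (β_n/α_n)‖x_n − x_{n−1}‖. -/

import Mathlib

open Filter Topology RealInnerProductSpace

noncomputable section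

variable {E : Type*} [NormedAddCommGroup E] [InnerProductSpace ℝ E]

/-- The Fréchet (viscosity) subdifferential of an extended-real-valued function `h` at `x`:
`v` belongs to it iff `x ∈ dom h` and
`liminf_{y → x} (h y - h x - ⟪v, y - x⟫)/‖y - x‖ ≥ 0`, expressed equivalently by the
epsilon-characterization of the liminf. -/
def frechetSubdiff (h : E → EReal) (x : E) : Set E :=
  {v | h x ≠ ⊤ ∧ ∀ ε : ℝ, 0 < ε →
    ∀ᶠ y in 𝓝 x, (((h x).toReal + ⟪v, y - x⟫ - ε * ‖y - x‖ : ℝ) : EReal) ≤ h y}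

/-- The limiting (Mordukhovich) subdifferential of `h` at `x`. -/
def limitingSubdiff (h : E → EReal) (x : E) : Set E :=
  {v | h x ≠ ⊤ ∧ ∃ xk vk : ℕ → E,
    Tendsto xk atTop (𝓝 x) ∧
    Tendsto (fun k => h (xk k)) atTop (𝓝 (h x)) ∧
    (∀ k, vk k ∈ frechetSubdiff h (xk k)) ∧
    Tendsto vk atTop (𝓝 v)}

/-- Lemma 3.3: the vectors
`y_{n+1} = (∇F(x_n) - ∇F(x_{n+1}))/α_n + ∇g(x_{n+1}) - ∇g(x_n) + (β_n/α_n)(x_n - x_{n-1})`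
belong to `∂(f+g)(x_{n+1})` and satisfy
`‖y_{n+1}‖ ≤ ((LF + α_n Lg)/α_n)‖x_n - x_{n+1}‖ + (β_n/α_n)‖x_n - x_{n-1}‖`. -/
theorem stmt8
    (m : ℕ)
    (f : EuclideanSpace ℝ (Fin m) → EReal)
    -- `f` is proper (never `⊥`, somewhere finite), lower semicontinuous and bounded below
    (hfbot : ∀ z, f z ≠ ⊥) (hfproper : ∃ z, f z ≠ ⊤)
    (hflsc : LowerSemicontinuous f)
    (hfbdd : ∃ cl : ℝ, ∀ z, (cl : EReal) ≤ f z)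
    -- `g` is differentiable with `Lg`-Lipschitz gradient
    (g : EuclideanSpace ℝ (Fin m) → ℝ) (Lg : ℝ) (hLg : 0 ≤ Lg)
    (hgdiff : Differentiable ℝ g)
    (hglip : ∀ z w, ‖gradient g z - gradient g w‖ ≤ Lg * ‖z - w‖)
    -- `F` is `σ`-strongly convex and differentiable with `LF`-Lipschitz gradient
    (F : EuclideanSpace ℝ (Fin m) → ℝ) (σ LF : ℝ) (hσ : 0 < σ) (hLF : 0 < LF)
    (hFconv : ConvexOn ℝ Set.univ fun z => F z - σ / 2 * ‖z‖ ^ 2)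
    (hFdiff : Differentiable ℝ F)
    (hFlip : ∀ z w, ‖gradient F z - gradient F w‖ ≤ LF * ‖z - w‖)
    -- parameters of the algorithm
    (αlo αhi β : ℝ) (hαlo : 0 < αlo) (hαorder : αlo ≤ αhi) (hβ : 0 ≤ β)
    (α βs : ℕ → ℝ)
    (hα : ∀ n, 1 ≤ n → αlo ≤ α n ∧ α n ≤ αhi)
    (hβs : ∀ n, 1 ≤ n → 0 ≤ βs n ∧ βs n ≤ β)
    -- the sequence generated by Algorithm 1:
    -- `x (n+1)` minimizes `u ↦ D_F(u, x n) + α n • ⟪u, ∇g(x n)⟫ + βs n • ⟪u, x (n-1) - x n⟫ + α n • f u`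
    (x : ℕ → EuclideanSpace ℝ (Fin m))
    (halg : ∀ n, 1 ≤ n → ∀ u,
      ((F (x (n + 1)) - F (x n) - ⟪gradient F (x n), x (n + 1) - x n⟫
          + α n * ⟪x (n + 1), gradient g (x n)⟫
          + βs n * ⟪x (n + 1), x (n - 1) - x n⟫ : ℝ) : EReal)
        + (α n : EReal) * f (x (n + 1))
      ≤ ((F u - F (x n) - ⟪gradient F (x n), u - x n⟫
          + α n * ⟪u, gradient g (x n)⟫
          + βs n * ⟪u, x (n - 1) - x n⟫ : ℝ) : EReal)
        + (α n : EReal) * f u)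
    (y : ℕ → EuclideanSpace ℝ (Fin m))
    (hy : ∀ n, 1 ≤ n → y (n + 1) =
      (1 / α n) • (gradient F (x n) - gradient F (x (n + 1)))
      + (gradient g (x (n + 1)) - gradient g (x n))
      + (βs n / α n) • (x n - x (n - 1))) :
    ∀ n, 1 ≤ n →
      y (n + 1) ∈ limitingSubdiff (fun z => f z + ((g z : ℝ) : EReal)) (x (n + 1)) ∧
      ‖y (n + 1)‖ ≤ (LF + α n * Lg) / α n * ‖x n - x (n + 1)‖
        + βs n / α n * ‖x n - x (n - 1)‖ := by
  intro n hn
  obtain ⟨hα1, hα2⟩ := hα n hn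
  have hαpos : (0:ℝ) < α n := lt_of_lt_of_le hαlo hα1
  obtain ⟨hβ1, hβ2⟩ := hβs n hn
  constructor
  · -- membership in the limiting subdifferential via constant sequences
    -- notation
    set X := x (n + 1) with hXdef
    set Xn := x n with hXndef
    set Xp := x (n - 1) with hXpdef
    -- Step 1: f X ≠ ⊤
    have hfXtop : f X ≠ ⊤ := by
      obtain ⟨z, hz⟩ := hfproper
      intro hX
      have h0 := halg n hn z
      rw [hX, ← EReal.coe_toReal hz (hfbot z), EReal.mul_top_of_pos
        (by exact_mod_cast hαpos), EReal.coe_add_top, ← EReal.coe_mul, ← EReal.coe_add] at h0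
      exact (EReal.coe_ne_top _) (top_le_iff.mp h0)
    set r : ℝ := (f X).toReal with hrdef
    have hX : f X = (r : EReal) := (EReal.coe_toReal hfXtop (hfbot X)).symm
    -- Step 2: real-valued minimization inequality
    have key : ∀ u, f u ≠ ⊤ →
        (F X - F Xn - ⟪gradient F Xn, X - Xn⟫ + α n * ⟪X, gradient g Xn⟫
          + βs n * ⟪X, Xp - Xn⟫) + α n * r
        ≤ (F u - F Xn - ⟪gradient F Xn, u - Xn⟫ + α n * ⟪u, gradient g Xn⟫
          + βs n * ⟪u, Xp - Xn⟫) + α n * (f u).toReal := by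
      intro u hu
      have h0 := halg n hn u
      rw [hX, ← EReal.coe_toReal hu (hfbot u), ← EReal.coe_mul, ← EReal.coe_mul,
        ← EReal.coe_add, ← EReal.coe_add] at h0
      exact_mod_cast h0
    -- value of the sum at X
    have hval : f X + ((g X : ℝ) : EReal) = ((r + g X : ℝ) : EReal) := by
      rw [hX, ← EReal.coe_add]
    have hne : f X + ((g X : ℝ) : EReal) ≠ ⊤ := by
      rw [hval]; exact EReal.coe_ne_top _
    refine ⟨hne, fun _ => X, fun _ => y (n + 1), tendsto_const_nhds, tendsto_const_nhds,
      fun k => ?_, tendsto_const_nhds⟩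
    refine ⟨hne, fun ε hε => ?_⟩
    -- little-o estimates from differentiability
    have hFo := (hasGradientAt_iff_isLittleO.mp (hFdiff X).hasGradientAt).def
      (show (0:ℝ) < ε * α n / 2 by positivity)
    have hgo := (hasGradientAt_iff_isLittleO.mp (hgdiff X).hasGradientAt).def
      (show (0:ℝ) < ε / 2 by positivity)
    simp only [Real.norm_eq_abs] at hFo hgo
    filter_upwards [hFo, hgo] with u hFu hgu
    by_cases hu : f u = ⊤
    · show _ ≤ f u + ((g u : ℝ) : EReal)
      rw [hu, EReal.top_add_coe]
      exact le_top
    · -- the real inequality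
      have hk := key u hu
      have hyexp : α n * ⟪y (n + 1), u - X⟫
          = (⟪gradient F Xn, u - X⟫ - ⟪gradient F X, u - X⟫)
            + α n * (⟪gradient g X, u - X⟫ - ⟪gradient g Xn, u - X⟫)
            + βs n * (⟪Xn, u - X⟫ - ⟪Xp, u - X⟫) := by
        rw [hy n hn]
        simp only [inner_add_left, inner_sub_left, real_inner_smul_left]
        field_simp
        ring
      -- identities to relate the inner products in `hk` with those above
      have q1 : ⟪gradient F Xn, u - Xn⟫ - ⟪gradient F Xn, X - Xn⟫
          = ⟪gradient F Xn, u - X⟫ := by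
        simp only [inner_sub_right]; ring
      have q2 : α n * (⟪u, gradient g Xn⟫ - ⟪X, gradient g Xn⟫)
          = α n * ⟪gradient g Xn, u - X⟫ := by
        rw [inner_sub_right, real_inner_comm u, real_inner_comm X]
      have q3 : βs n * (⟪u, Xp - Xn⟫ - ⟪X, Xp - Xn⟫)
          = βs n * (⟪Xp, u - X⟫ - ⟪Xn, u - X⟫) := by
        simp only [inner_sub_right, inner_sub_left]
        rw [real_inner_comm u Xp, real_inner_comm u Xn, real_inner_comm X Xp,
          real_inner_comm X Xn]
        ring
      -- quadratic error bounds
      have hFb : F u - F X - ⟪gradient F X, u - X⟫ ≤ ε * α n / 2 * ‖u - X‖ :=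
        (abs_le.mp hFu).2
      have hgb : α n * (-(ε / 2 * ‖u - X‖)) ≤ α n * (g u - g X - ⟪gradient g X, u - X⟫) := by
        have h1 := (abs_le.mp hgu).1
        exact mul_le_mul_of_nonneg_left (by linarith) hαpos.le
      -- assemble
      have H : α n * (r + g X + ⟪y (n + 1), u - X⟫ - ε * ‖u - X‖)
          ≤ α n * ((f u).toReal + g u) := by
        ring_nf at hk hyexp q1 q2 q3 hFb hgb ⊢
        linarith [hk, hyexp, q1, q2, q3, hFb, hgb]
      have final : r + g X + ⟪y (n + 1), u - X⟫ - ε * ‖u - X‖ ≤ (f u).toReal + g u :=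
        le_of_mul_le_mul_left H hαpos
      show ((((f X + ((g X : ℝ) : EReal)).toReal + ⟪y (n + 1), u - X⟫
          - ε * ‖u - X‖ : ℝ)) : EReal) ≤ f u + ((g u : ℝ) : EReal)
      rw [hval, EReal.toReal_coe, ← EReal.coe_toReal hu (hfbot u), ← EReal.coe_add,
        EReal.coe_le_coe_iff]
      linarith [final]
  · -- norm bound
    rw [hy n hn]
    have t1 : ‖(1 / α n) • (gradient F (x n) - gradient F (x (n+1)))‖
        ≤ 1 / α n * (LF * ‖x n - x (n+1)‖) := by
      rw [norm_smul, Real.norm_eq_abs, abs_of_pos (by positivity)]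
      exact mul_le_mul_of_nonneg_left (hFlip _ _) (by positivity)
    have t2 : ‖gradient g (x (n+1)) - gradient g (x n)‖ ≤ Lg * ‖x n - x (n+1)‖ := by
      rw [norm_sub_rev (x n)]
      exact hglip _ _
    have t3 : ‖(βs n / α n) • (x n - x (n - 1))‖ ≤ βs n / α n * ‖x n - x (n-1)‖ := by
      rw [norm_smul, Real.norm_eq_abs, abs_of_nonneg (by positivity)]
    calc ‖_ + _ + _‖ ≤ _ := norm_add₃_le
      _ ≤ 1 / α n * (LF * ‖x n - x (n+1)‖) + Lg * ‖x n - x (n+1)‖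
            + βs n / α n * ‖x n - x (n-1)‖ := by gcongr ?_ + ?_ + ?_
      _ = (LF + α n * Lg) / α n * ‖x n - x (n + 1)‖ + βs n / α n * ‖x n - x (n - 1)‖ := by
        field_simp
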